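/- arXiv:1209.5521 — 2 statements merged into one kernel-verified Lean document; each statement's English description precedes it below -/
import Mathlib

section
/- Let c > 0, K ∈ ℝ and n ∈ ℕ. Consider the function f : ℝ → ℂ given by f(β) = exp(iβK − β²c²/2). Then the n-th derivative of f at β = 0 equals (−c)ⁿ · He_n(−iK/c), where He_n(−iK/c) denotes the evaluation at the complex number −iK/c of the n-th probabilists' Hermite polynomial He_n. -/
open Polynomial Complex

lemma gauss_char_key (c K : ℝ) (hc : (c:ℂ) ≠ 0) (n : ℕ) (β : ℝ) :
    iteratedDeriv n
        (fun β : ℝ => Complex.exp (Complex.I * (β : ℂ) * (K : ℂ) - (β : ℂ) ^ 2 * (c : ℂ) ^ 2 / 2))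
        β =
      (-(c : ℂ)) ^ n *
        Polynomial.aeval ((c:ℂ) * β - Complex.I * K / c) (Polynomial.hermite n) *
        Complex.exp (Complex.I * (β : ℂ) * (K : ℂ) - (β : ℂ) ^ 2 * (c : ℂ) ^ 2 / 2) := by
  induction n generalizing β with
  | zero => simp
  | succ n ih =>
    rw [iteratedDeriv_succ]
    have hfun : iteratedDeriv n
        (fun β : ℝ => Complex.exp (Complex.I * (β : ℂ) * (K : ℂ) - (β : ℂ) ^ 2 * (c : ℂ) ^ 2 / 2))
        = fun β : ℝ => (-(c : ℂ)) ^ n *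
          Polynomial.aeval ((c:ℂ) * β - Complex.I * K / c) (Polynomial.hermite n) *
          Complex.exp (Complex.I * (β : ℂ) * (K : ℂ) - (β : ℂ) ^ 2 * (c : ℂ) ^ 2 / 2) :=
      funext fun β => ih β
    rw [hfun]
    -- derivative of the polynomial part
    have h1 : HasDerivAt (fun β : ℝ =>
        Polynomial.aeval ((c:ℂ) * β - Complex.I * K / c) (Polynomial.hermite n))
        ((Polynomial.aeval ((c:ℂ) * β - Complex.I * K / c)
          (Polynomial.derivative (Polynomial.hermite n))) * c) β := by
      have inner : HasDerivAt (fun z : ℂ => (c:ℂ) * z - Complex.I * K / c) c (β:ℂ) := by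
        simpa using ((hasDerivAt_id (β:ℂ)).const_mul (c:ℂ)).sub_const (Complex.I * K / c)
      have outer := Polynomial.hasDerivAt_aeval (q := Polynomial.hermite n)
        ((c:ℂ) * (β:ℂ) - Complex.I * K / c)
      exact (outer.comp (β:ℂ) inner).comp_ofReal
    -- derivative of the exponential part
    have h2 : HasDerivAt (fun β : ℝ =>
        Complex.exp (Complex.I * (β : ℂ) * (K : ℂ) - (β : ℂ) ^ 2 * (c : ℂ) ^ 2 / 2))
        ((Complex.I * K - (β:ℂ) * c ^ 2) *
          Complex.exp (Complex.I * (β : ℂ) * (K : ℂ) - (β : ℂ) ^ 2 * (c : ℂ) ^ 2 / 2)) β := by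
      have inner : HasDerivAt (fun z : ℂ => Complex.I * z * K - z ^ 2 * (c:ℂ) ^ 2 / 2)
          (Complex.I * K - (β:ℂ) * c ^ 2) (β:ℂ) := by
        have ha : HasDerivAt (fun z : ℂ => Complex.I * z * K) (Complex.I * K) (β:ℂ) := by
          simpa using (((hasDerivAt_id (β:ℂ)).const_mul Complex.I).mul_const (K:ℂ))
        have hb : HasDerivAt (fun z : ℂ => z ^ 2 * (c:ℂ) ^ 2 / 2) ((β:ℂ) * c ^ 2) (β:ℂ) := by
          have := ((hasDerivAt_pow 2 (β:ℂ)).mul_const ((c:ℂ) ^ 2)).div_const 2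
          exact this.congr_deriv (by norm_num; ring)
        exact ha.sub hb
      have := inner.cexp.comp_ofReal
      convert this using 1
      ring
    have h3 := ((h1.const_mul ((-(c : ℂ)) ^ n)).mul h2)
    erw [h3.deriv]
    rw [Polynomial.hermite_succ]
    simp only [map_sub, map_mul, Polynomial.aeval_X]
    have hy : Complex.I * K - (β:ℂ) * c ^ 2 = -(c:ℂ) * ((c:ℂ) * β - Complex.I * K / c) := by
      field_simp
      ring
    rw [hy]
    ring

/-- Let `c > 0`, `K ∈ ℝ` and `n ∈ ℕ`. The `n`-th derivative of
`β ↦ exp(iβK − β²c²/2)` at `β = 0` equals `(−c)ⁿ He_n(−iK/c)`, where `He_n` is the `n`-th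
probabilists' Hermite polynomial evaluated at the complex number `−iK/c`. -/
theorem iteratedDeriv_gaussian_char_eq_hermite (c K : ℝ) (hc : 0 < c) (n : ℕ) :
    iteratedDeriv n
        (fun β : ℝ => Complex.exp (Complex.I * (β : ℂ) * (K : ℂ) - (β : ℂ) ^ 2 * (c : ℂ) ^ 2 / 2))
        0 =
      (-(c : ℂ)) ^ n *
        Polynomial.aeval (-Complex.I * (K : ℂ) / (c : ℂ)) (Polynomial.hermite n) := by
  have hc' : (c:ℂ) ≠ 0 := by exact_mod_cast hc.ne'
  have := gauss_char_key c K hc' n 0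
  simpa [neg_div, neg_mul] using this
end

section
/- Let μ be a finite Borel measure on [0, ∞), let R > 0, and let g : ℂ → ℂ be a function that is analytic on the open set {z ∈ ℂ : Re z > 0} ∪ {z ∈ ℂ : |z| < R} and satisfies g(z) = ∫_0^∞ exp(−zλ) dμ(λ) for all z with Re z > 0. Then for every real x with x > −R, the function λ ↦ exp(−xλ) is μ-integrable and ∫_0^∞ exp(−xλ) dμ(λ) = g(x). -/
open MeasureTheory Complex
open scoped Nat NNReal ENNReal

set_option maxHeartbeats 1000000

lemma laplace_aux_pow_mul_exp_le {x0 t : ℝ} (hx0 : 0 < x0) (ht : 0 ≤ t) (n : ℕ) :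
    t ^ n * Real.exp (-(x0 * t)) ≤ (n ! : ℝ) / x0 ^ n := by
  have h := Real.pow_div_factorial_le_exp (x := x0 * t) (mul_nonneg hx0.le ht) n
  have hE : Real.exp (-(x0 * t)) * Real.exp (x0 * t) = 1 := by
    rw [← Real.exp_add]; simp
  have hEpos : 0 < Real.exp (-(x0 * t)) := Real.exp_pos _
  have hxp : (0:ℝ) < x0 ^ n := pow_pos hx0 n
  have hfac : (0:ℝ) < (n ! : ℝ) := by positivity
  rw [div_le_iff₀ hfac] at h
  rw [mul_pow] at h
  rw [le_div_iff₀ hxp]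
  calc t ^ n * Real.exp (-(x0 * t)) * x0 ^ n
      = (x0 ^ n * t ^ n) * Real.exp (-(x0 * t)) := by ring
    _ ≤ (Real.exp (x0 * t) * n !) * Real.exp (-(x0 * t)) := by
        exact mul_le_mul_of_nonneg_right h hEpos.le
    _ = n ! := by rw [mul_comm (Real.exp (x0*t)) (n ! : ℝ), mul_assoc, mul_comm (Real.exp (x0*t)), hE, mul_one]

-- exp as tsum, real and complex
lemma laplace_aux_rexp_tsum (t : ℝ) : Real.exp t = ∑' n : ℕ, t ^ n / n ! := by
  rw [Real.exp_eq_exp_ℝ, NormedSpace.exp_eq_tsum_div]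

lemma laplace_aux_cexp_tsum (z : ℂ) : Complex.exp z = ∑' n : ℕ, z ^ n / n ! := by
  rw [Complex.exp_eq_exp_ℂ, NormedSpace.exp_eq_tsum_div]

/-- Laplace-transform continuation principle: let `μ` be a finite Borel measure supported
on `[0,∞)`, `R > 0`, and let `g : ℂ → ℂ` be analytic on the open set
`{Re z > 0} ∪ {|z| < R}` with `g(z) = ∫ e^{−zλ} dμ(λ)` for `Re z > 0`. Then for every
real `x > −R`, `λ ↦ e^{−xλ}` is `μ`-integrable and `∫ e^{−xλ} dμ(λ) = g(x)`. -/
theorem laplace_transform_analytic_continuation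
    (μ : Measure ℝ) [IsFiniteMeasure μ] (hμ : μ (Set.Iio 0) = 0)
    (R : ℝ) (hR : 0 < R) (g : ℂ → ℂ)
    (hg : AnalyticOnNhd ℂ g ({z : ℂ | 0 < z.re} ∪ Metric.ball 0 R))
    (hrep : ∀ z : ℂ, 0 < z.re → g z = ∫ l : ℝ, Complex.exp (-z * (l : ℂ)) ∂μ)
    (x : ℝ) (hx : -R < x) :
    Integrable (fun l : ℝ => Real.exp (-x * l)) μ ∧
      ∫ l : ℝ, Complex.exp (-(x : ℂ) * (l : ℂ)) ∂μ = g (x : ℂ) := by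
  have ae0 : ∀ᵐ l ∂μ, 0 ≤ l := by
    rw [ae_iff]
    convert hμ using 2
    ext l
    simp [not_le]
  rcases lt_or_ge 0 x with hxpos | hxle
  · -- direct case
    constructor
    · refine ⟨(Real.continuous_exp.comp (continuous_const.mul continuous_id)).aestronglyMeasurable, ?_⟩
      refine HasFiniteIntegral.of_bounded (C := 1) ?_
      filter_upwards [ae0] with l hl
      rw [Real.norm_eq_abs, Real.abs_exp]
      exact Real.exp_le_one_iff.mpr (by nlinarith)
    · exact (hrep x (by simpa using hxpos)).symm
  · -- continuation case : x ≤ 0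
    set x0 : ℝ := (R ^ 2 - x ^ 2) / (4 * R) with hx0def
    have hxR : x ^ 2 < R ^ 2 := by nlinarith
    have hx0 : 0 < x0 := div_pos (by nlinarith) (by positivity)
    set c : ℝ := x0 - x with hcdef
    have hc : 0 < c := by simp only [hcdef]; linarith
    have hc2 : c ^ 2 < R ^ 2 + x0 ^ 2 := by
      have hkey : x0 * (4 * R) = R ^ 2 - x ^ 2 := div_mul_cancel₀ _ (by positivity)
      have h2 : 2 * x0 * (-x) < R ^ 2 - x ^ 2 := by
        nlinarith [mul_pos (show (0:ℝ) < 4 * R + 2 * x by linarith) hx0]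
      nlinarith
    -- radius r
    set r : ℝ := (c + Real.sqrt (R ^ 2 + x0 ^ 2)) / 2 with hrdef
    have hsq : c < Real.sqrt (R ^ 2 + x0 ^ 2) := by
      rw [show c = Real.sqrt (c ^ 2) by rw [Real.sqrt_sq hc.le]]
      exact Real.sqrt_lt_sqrt (by positivity) hc2
    have hcr : c < r := by rw [hrdef]; linarith
    have hr0 : 0 < r := lt_trans hc hcr
    have hr2 : r ^ 2 < R ^ 2 + x0 ^ 2 := by
      have h1 : r < Real.sqrt (R ^ 2 + x0 ^ 2) := by rw [hrdef]; linarith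
      have := Real.sq_sqrt (show (0:ℝ) ≤ R ^ 2 + x0 ^ 2 by positivity)
      nlinarith [Real.sqrt_nonneg (R ^ 2 + x0 ^ 2)]
    -- the closed ball is inside the domain of analyticity
    have hsub : Metric.closedBall (x0 : ℂ) r ⊆ {z : ℂ | 0 < z.re} ∪ Metric.ball 0 R := by
      intro z hz
      rcases lt_or_ge 0 z.re with h | h
      · exact Or.inl h
      · right
        rw [Metric.mem_closedBall, Complex.dist_eq] at hz
        have habs : ‖z - x0‖ ^ 2 = (z.re - x0) ^ 2 + z.im ^ 2 := by
          rw [Complex.sq_norm, Complex.normSq_apply]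
          simp [Complex.sub_re, Complex.sub_im]
          ring
        have h1 : (z.re - x0) ^ 2 + z.im ^ 2 ≤ r ^ 2 := by
          rw [← habs]
          exact pow_le_pow_left₀ (norm_nonneg _) hz 2
        rw [Metric.mem_ball, Complex.dist_eq, sub_zero]
        have h2 : ‖z‖ ^ 2 < R ^ 2 := by
          rw [Complex.sq_norm, Complex.normSq_apply]
          nlinarith
        nlinarith [norm_nonneg z, (show (0:ℝ) ≤ R from hR.le)]
    have hnorm_pt : ∀ (n : ℕ) (l : ℝ), 0 ≤ l →
        ‖(-(l : ℂ)) ^ n * Complex.exp (-(x0 : ℂ) * l)‖ = l ^ n * Real.exp (-(x0 * l)) := by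
      intro n l hl
      rw [norm_mul, norm_pow, norm_neg, Complex.norm_real, Real.norm_eq_abs,
        _root_.abs_of_nonneg hl, Complex.norm_exp]
      congr 2
      simp
    -- integrability of the complex moment integrands
    have hintC : ∀ n : ℕ, Integrable (fun l : ℝ => (-(l : ℂ)) ^ n * Complex.exp (-(x0 : ℂ) * l)) μ := by
      intro n
      refine ⟨Continuous.aestronglyMeasurable (by fun_prop), ?_⟩
      refine HasFiniteIntegral.of_bounded (C := (n ! : ℝ) / x0 ^ n) ?_
      filter_upwards [ae0] with l hl
      rw [hnorm_pt n l hl]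
      exact laplace_aux_pow_mul_exp_le hx0 hl n
    -- the formal power series of the Laplace transform at x0
    set a : ℕ → ℂ := fun n => (∫ l : ℝ, (-(l : ℂ)) ^ n * Complex.exp (-(x0 : ℂ) * l) ∂μ) / n ! with hadef
    set q : FormalMultilinearSeries ℂ ℂ ℂ :=
      fun n => ContinuousMultilinearMap.mkPiRing ℂ (Fin n) (a n) with hqdef
    set M : ℝ := (μ Set.univ).toReal with hMdef
    have hM : 0 ≤ M := ENNReal.toReal_nonneg
    have hnormint : ∀ n : ℕ, ‖∫ l : ℝ, (-(l : ℂ)) ^ n * Complex.exp (-(x0 : ℂ) * l) ∂μ‖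
        ≤ (n ! : ℝ) / x0 ^ n * M := by
      intro n
      refine norm_integral_le_of_norm_le_const ?_
      filter_upwards [ae0] with l hl
      rw [hnorm_pt n l hl]
      exact laplace_aux_pow_mul_exp_le hx0 hl n
    have hFq : HasFPowerSeriesOnBall (fun z : ℂ => ∫ l : ℝ, Complex.exp (-z * l) ∂μ) q (x0 : ℂ)
        (ENNReal.ofReal x0) := by
      constructor
      · -- radius bound
        rw [ENNReal.ofReal]
        apply FormalMultilinearSeries.le_radius_of_bound _ M
        intro n
        have hqn : ‖q n‖ = ‖a n‖ := ContinuousMultilinearMap.norm_mkPiRing (a n)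
        have hcoe : ((x0.toNNReal : ℝ≥0) : ℝ) = x0 := Real.coe_toNNReal _ hx0.le
        rw [hqn, hcoe, hadef]
        have hfac : (0 : ℝ) < (n ! : ℝ) := by positivity
        have hxp : (0 : ℝ) < x0 ^ n := pow_pos hx0 n
        rw [norm_div]
        have hnf : ‖((n ! : ℕ) : ℂ)‖ = (n ! : ℝ) := by
          rw [Complex.norm_natCast]
        rw [hnf, div_mul_eq_mul_div, div_le_iff₀ hfac]
        have hkey : (n ! : ℝ) / x0 ^ n * x0 ^ n = (n ! : ℝ) := div_mul_cancel₀ _ hxp.ne'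
        calc ‖∫ l : ℝ, (-(l : ℂ)) ^ n * Complex.exp (-(x0 : ℂ) * l) ∂μ‖ * x0 ^ n
            ≤ (n ! : ℝ) / x0 ^ n * M * x0 ^ n :=
              mul_le_mul_of_nonneg_right (hnormint n) hxp.le
          _ = (n ! : ℝ) / x0 ^ n * x0 ^ n * M := by ring
          _ = (n ! : ℝ) * M := by rw [hkey]
          _ = M * (n ! : ℝ) := by ring
      · simpa using hx0
      · intro y hy
        have hy' : ‖y‖ < x0 := by
          rwa [mem_emetric_ball_zero_iff, ← ofReal_norm,
            ENNReal.ofReal_lt_ofReal_iff hx0] at hy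
        set G : ℕ → ℝ → ℂ :=
          fun n l => ((-(l : ℂ)) ^ n * Complex.exp (-(x0 : ℂ) * l)) * (y ^ n / n !) with hGdef
        have hGint : ∀ n : ℕ, Integrable (G n) μ := fun n => (hintC n).mul_const _
        have hGnorm : ∀ n : ℕ, ∫ l : ℝ, ‖G n l‖ ∂μ ≤ M * (‖y‖ / x0) ^ n := by
          intro n
          have hbd : ∀ᵐ l ∂μ, ‖G n l‖ ≤ (‖y‖ / x0) ^ n := by
            filter_upwards [ae0] with l hl
            rw [hGdef]
            simp only
            rw [norm_mul ((-(l:ℂ)) ^ n * Complex.exp (-(x0:ℂ) * l)), hnorm_pt n l hl,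
              norm_div, norm_pow, Complex.norm_natCast]
            have h1 := laplace_aux_pow_mul_exp_le hx0 hl n
            have hfac : (0 : ℝ) < (n ! : ℝ) := by positivity
            have hxp : (0 : ℝ) < x0 ^ n := pow_pos hx0 n
            have hyn : (0 : ℝ) ≤ ‖y‖ ^ n / (n ! : ℝ) := by positivity
            calc l ^ n * Real.exp (-(x0 * l)) * (‖y‖ ^ n / (n ! : ℝ))
                ≤ (n ! : ℝ) / x0 ^ n * (‖y‖ ^ n / (n ! : ℝ)) :=
                  mul_le_mul_of_nonneg_right h1 hyn
              _ = (‖y‖ / x0) ^ n := by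
                  rw [div_pow ‖y‖ x0, div_mul_div_comm, mul_comm ((n ! : ℝ)) (‖y‖ ^ n),
                    mul_div_mul_right _ _ hfac.ne']
          calc ∫ l : ℝ, ‖G n l‖ ∂μ ≤ ∫ _ : ℝ, (‖y‖ / x0) ^ n ∂μ :=
                integral_mono_ae (hGint n).norm (integrable_const _) hbd
            _ = M * (‖y‖ / x0) ^ n := by rw [integral_const, smul_eq_mul]; rfl
        have hGsum : Summable fun n : ℕ => ∫ l : ℝ, ‖G n l‖ ∂μ := by
          refine Summable.of_nonneg_of_le (fun n => integral_nonneg fun l => norm_nonneg _)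
            hGnorm ?_
          exact (summable_geometric_of_lt_one (by positivity)
            ((div_lt_one hx0).mpr hy')).mul_left M
        have key := hasSum_integral_of_summable_integral_norm hGint hGsum
        have hts : ∀ l : ℝ, ∑' n : ℕ, G n l = Complex.exp (-((x0 : ℂ) + y) * l) := by
          intro l
          calc ∑' n : ℕ, G n l
              = ∑' n : ℕ, Complex.exp (-(x0 : ℂ) * l) * ((-(y * (l : ℂ))) ^ n / n !) := by
                refine tsum_congr fun n => ?_
                rw [hGdef]
                simp only
                rw [show (-(y * (l : ℂ))) = (-(l : ℂ)) * y by ring, mul_pow]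
                ring
            _ = Complex.exp (-(x0 : ℂ) * l) * ∑' n : ℕ, (-(y * (l : ℂ))) ^ n / n ! :=
                tsum_mul_left
            _ = Complex.exp (-(x0 : ℂ) * l) * Complex.exp (-(y * l)) := by
                rw [← laplace_aux_cexp_tsum]
            _ = Complex.exp (-((x0 : ℂ) + y) * l) := by
                rw [← Complex.exp_add]
                ring_nf
        have hGint_eq : ∀ n : ℕ, ∫ l : ℝ, G n l ∂μ = q n fun _ => y := by
          intro n
          rw [hqdef]
          simp only [ContinuousMultilinearMap.mkPiRing_apply, Finset.prod_const,
            Finset.card_univ, Fintype.card_fin, smul_eq_mul]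
          rw [hGdef]
          simp only
          rw [integral_mul_const, hadef]
          ring
        convert key using 1
        · exact funext fun n => (hGint_eq n).symm
        · exact integral_congr_ae (Filter.Eventually.of_forall fun l => (hts l).symm)
    -- g agrees with the Laplace transform near x0, so has the same power series there
    have hgF : (fun z : ℂ => ∫ l : ℝ, Complex.exp (-z * l) ∂μ) =ᶠ[nhds (x0 : ℂ)] g := by
      filter_upwards [Metric.ball_mem_nhds (x0 : ℂ) hx0] with z hz
      rw [Metric.mem_ball, Complex.dist_eq] at hz
      have hzre : 0 < z.re := by
        have h1 : |(z - (x0 : ℂ)).re| ≤ ‖z - x0‖ := Complex.abs_re_le_norm _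
        have h2 : (z - (x0 : ℂ)).re = z.re - x0 := by simp
        rw [h2] at h1
        have h3 := neg_abs_le (z.re - x0)
        linarith [lt_of_le_of_lt h1 hz]
      exact (hrep z hzre).symm
    have hq_at : HasFPowerSeriesAt g q (x0 : ℂ) := hFq.hasFPowerSeriesAt.congr hgF
    -- g has its Cauchy power series on the big ball of radius r
    set r' : ℝ≥0 := ⟨r, hr0.le⟩ with hr'def
    have hdiff : DifferentiableOn ℂ g (Metric.closedBall (x0 : ℂ) r') := fun z hz =>
      ((hg z (hsub hz)).differentiableAt).differentiableWithinAt
    have hgp : HasFPowerSeriesOnBall g (cauchyPowerSeries g (x0 : ℂ) r') (x0 : ℂ) r' :=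
      hdiff.hasFPowerSeriesOnBall (by exact_mod_cast hr0)
    have hpq : cauchyPowerSeries g (x0 : ℂ) r' = q :=
      hgp.hasFPowerSeriesAt.eq_formalMultilinearSeries hq_at
    rw [hpq] at hgp
    -- evaluate the series at x - x0
    have hmem : ((x : ℂ) - x0) ∈ Metric.eball (0 : ℂ) r' := by
      rw [mem_emetric_ball_zero_iff]
      have hnorm : ‖(x : ℂ) - (x0 : ℂ)‖ = c := by
        rw [← Complex.ofReal_sub, Complex.norm_real, Real.norm_eq_abs,
          abs_of_nonpos (by linarith : x - x0 ≤ 0)]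
        rw [hcdef]; ring
      rw [← ofReal_norm, hnorm,
        show (r' : ℝ≥0∞) = ENNReal.ofReal r from (ENNReal.ofReal_eq_coe_nnreal hr0.le).symm]
      exact (ENNReal.ofReal_lt_ofReal_iff_of_nonneg hc.le).mpr hcr
    have hsum_x := hgp.hasSum hmem
    rw [show (x0 : ℂ) + ((x : ℂ) - x0) = (x : ℂ) by ring] at hsum_x
    -- identify the terms with real integrals
    set u : ℕ → ℝ → ℝ := fun n l => (c * l) ^ n / n ! * Real.exp (-(x0 * l)) with hudef
    have hucont : ∀ n : ℕ, Continuous (u n) := by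
      intro n
      rw [hudef]
      fun_prop
    have hunonneg : ∀ n : ℕ, ∀ᵐ l ∂μ, 0 ≤ u n l := by
      intro n
      filter_upwards [ae0] with l hl
      rw [hudef]
      have : 0 ≤ (c * l) ^ n := pow_nonneg (mul_nonneg hc.le hl) n
      positivity
    have huint : ∀ n : ℕ, Integrable (u n) μ := by
      intro n
      refine ⟨(hucont n).aestronglyMeasurable,
        HasFiniteIntegral.of_bounded (C := c ^ n / n ! * ((n ! : ℝ) / x0 ^ n)) ?_⟩
      filter_upwards [ae0] with l hl
      rw [hudef]
      simp only
      rw [Real.norm_eq_abs, _root_.abs_of_nonneg (mul_nonneg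
        (div_nonneg (pow_nonneg (mul_nonneg hc.le hl) n) (Nat.cast_nonneg _))
        (Real.exp_pos _).le)]
      rw [mul_pow c l]
      calc c ^ n * l ^ n / n ! * Real.exp (-(x0 * l))
          = c ^ n / n ! * (l ^ n * Real.exp (-(x0 * l))) := by ring
        _ ≤ c ^ n / n ! * ((n ! : ℝ) / x0 ^ n) :=
            mul_le_mul_of_nonneg_left (laplace_aux_pow_mul_exp_le hx0 hl n) (by positivity)
    -- identify the power-series terms with real integrals
    have hcexp_cast : ∀ l : ℝ, Complex.exp (-(x0 : ℂ) * l) = ((Real.exp (-(x0 * l)) : ℝ) : ℂ) := by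
      intro l
      rw [Complex.ofReal_exp]
      congr 1
      push_cast
      ring
    have hqb : ∀ n : ℕ, (q n fun _ => (x : ℂ) - x0) = ((∫ l : ℝ, u n l ∂μ : ℝ) : ℂ) := by
      intro n
      have hpt : ∀ l : ℝ, ((x : ℂ) - x0) ^ n
          * ((-(l : ℂ)) ^ n * Complex.exp (-(x0 : ℂ) * l) * ((n ! : ℂ))⁻¹)
          = ((u n l : ℝ) : ℂ) := by
        intro l
        have h3 : ((x : ℂ) - x0) * (-(l : ℂ)) = ((c * l : ℝ) : ℂ) := by
          rw [hcdef]
          push_cast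
          ring
        calc ((x : ℂ) - x0) ^ n * ((-(l : ℂ)) ^ n * Complex.exp (-(x0 : ℂ) * l) * ((n ! : ℂ))⁻¹)
            = (((x : ℂ) - x0) * (-(l : ℂ))) ^ n * Complex.exp (-(x0 : ℂ) * l) * ((n ! : ℂ))⁻¹ := by
              rw [mul_pow]
              ring
          _ = ((c * l : ℝ) : ℂ) ^ n * ((Real.exp (-(x0 * l)) : ℝ) : ℂ) * ((n ! : ℂ))⁻¹ := by
              rw [h3, hcexp_cast l]
          _ = ((u n l : ℝ) : ℂ) := by
              rw [hudef]
              push_cast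
              ring
      calc (q n fun _ => (x : ℂ) - x0)
          = ∫ l : ℝ, ((u n l : ℝ) : ℂ) ∂μ := by
            rw [hqdef]
            simp only [ContinuousMultilinearMap.mkPiRing_apply, Finset.prod_const,
              Finset.card_univ, Fintype.card_fin, smul_eq_mul]
            rw [hadef]
            simp only
            rw [div_eq_mul_inv, ← integral_mul_const, ← integral_const_mul]
            exact integral_congr_ae (Filter.Eventually.of_forall hpt)
        _ = ((∫ l : ℝ, u n l ∂μ : ℝ) : ℂ) := integral_ofReal
    simp only [hqb] at hsum_x
    have hsummb : Summable fun n : ℕ => ∫ l : ℝ, u n l ∂μ := by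
      have h1 := hsum_x.summable
      rwa [Complex.summable_ofReal] at h1
    have hgx : g (x : ℂ) = ((∑' n : ℕ, ∫ l : ℝ, u n l ∂μ : ℝ) : ℂ) :=
      hsum_x.unique (Complex.hasSum_ofReal.mpr hsummb.hasSum)
    -- the pointwise sum of u n is the exponential
    have hts_u : ∀ l : ℝ, ∑' n : ℕ, u n l = Real.exp (-x * l) := by
      intro l
      calc ∑' n : ℕ, u n l = (∑' n : ℕ, (c * l) ^ n / n !) * Real.exp (-(x0 * l)) := by
            rw [hudef]; exact tsum_mul_right
        _ = Real.exp (c * l) * Real.exp (-(x0 * l)) := by rw [← laplace_aux_rexp_tsum]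
        _ = Real.exp (-x * l) := by
            rw [← Real.exp_add]
            congr 1
            rw [hcdef]
            ring
    have husum : ∀ l : ℝ, Summable fun n : ℕ => u n l := by
      intro l
      rw [hudef]
      exact (Real.summable_pow_div_factorial (c * l)).mul_right _
    -- summability of the norms of the integrals
    have hnormu : ∀ n : ℕ, ∫ l : ℝ, ‖u n l‖ ∂μ = ∫ l : ℝ, u n l ∂μ := by
      intro n
      refine integral_congr_ae ?_
      filter_upwards [hunonneg n] with l hl
      exact Real.norm_of_nonneg hl
    have hsummn : Summable fun n : ℕ => ∫ l : ℝ, ‖u n l‖ ∂μ := by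
      simpa only [funext hnormu] using hsummb
    -- integrability of the target function
    have hIntx : Integrable (fun l : ℝ => Real.exp (-x * l)) μ := by
      refine ⟨(Real.continuous_exp.comp (continuous_const.mul continuous_id)).aestronglyMeasurable, ?_⟩
      show (∫⁻ l : ℝ, ↑‖Real.exp (-x * l)‖₊ ∂μ) < ⊤
      have heq : ∀ᵐ l ∂μ, (‖Real.exp (-x * l)‖₊ : ℝ≥0∞) = ∑' n : ℕ, ENNReal.ofReal (u n l) := by
        filter_upwards [ae0] with l hl
        rw [← enorm_eq_nnnorm, Real.enorm_eq_ofReal (Real.exp_pos _).le, ← hts_u l,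
          ENNReal.ofReal_tsum_of_nonneg ?_ (husum l)]
        intro n
        rw [hudef]
        exact mul_nonneg (div_nonneg (pow_nonneg (mul_nonneg hc.le hl) n) (Nat.cast_nonneg _))
          (Real.exp_pos _).le
      rw [lintegral_congr_ae heq,
        lintegral_tsum fun n => ((hucont n).measurable.ennreal_ofReal).aemeasurable]
      have h2 : ∀ n : ℕ, ∫⁻ l : ℝ, ENNReal.ofReal (u n l) ∂μ = ENNReal.ofReal (∫ l : ℝ, u n l ∂μ) :=
        fun n => (MeasureTheory.ofReal_integral_eq_lintegral_ofReal (huint n) (hunonneg n)).symm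
      simp only [h2]
      rw [← ENNReal.ofReal_tsum_of_nonneg
        (fun n => integral_nonneg_of_ae (hunonneg n)) hsummb]
      exact ENNReal.ofReal_lt_top
    refine ⟨hIntx, ?_⟩
    -- final identity
    have hfinal : ∫ l : ℝ, Real.exp (-x * l) ∂μ = ∑' n : ℕ, ∫ l : ℝ, u n l ∂μ := by
      rw [integral_tsum_of_summable_integral_norm huint hsummn]
      refine integral_congr_ae (Filter.Eventually.of_forall fun l => ?_)
      exact (hts_u l).symm
    calc ∫ l : ℝ, Complex.exp (-(x : ℂ) * l) ∂μ
        = ∫ l : ℝ, ((Real.exp (-x * l) : ℝ) : ℂ) ∂μ := by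
          refine integral_congr_ae (Filter.Eventually.of_forall fun l => ?_)
          show Complex.exp (-(x : ℂ) * l) = ((Real.exp (-x * l) : ℝ) : ℂ)
          rw [Complex.ofReal_exp]
          congr 1
          push_cast
          ring
      _ = ((∫ l : ℝ, Real.exp (-x * l) ∂μ : ℝ) : ℂ) := integral_ofReal
      _ = ((∑' n : ℕ, ∫ l : ℝ, u n l ∂μ : ℝ) : ℂ) := by rw [hfinal]
      _ = g (x : ℂ) := hgx.symm
end
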